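/- With notation as in the context, the left brace B = T ⋊∘ Z/(p) is simple if and only if im(c_i − id) + im(f_i − id) = (Z/(p))^{n_i} for every i = 1,…,s. In particular, B is simple whenever c_i − id is invertible for every i. -/

import Mathlib

/-- `(Z/(p))^n`. -/
abbrev BraceVec (p n : ℕ) := Fin n → ZMod p

/-- The underlying set of the semidirect product `T = (Z/(p))^n ⋊ A`, where
`n = n₁ + ⋯ + n_s`, `(Z/(p))^n = ∏ i, (Z/(p))^{n_i}` and `A = ∏ i, Z/(l i)`;
its addition is the componentwise one. -/
abbrev BraceT (p s : ℕ) (l nn : Fin s → ℕ) : Type :=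
  ((i : Fin s) → BraceVec p (nn i)) × ((i : Fin s) → ZMod (l i))

/-- Multiplication of `T = (Z/(p))^n ⋊ A` via `β_{(a₁,…,a_s)} = (c₁^{a₁},…,c_s^{a_s})`. -/
def braceTmul {p s : ℕ} {l nn : Fin s → ℕ}
    (c : ∀ i : Fin s, AddAut (BraceVec p (nn i)))
    (x y : BraceT p s l nn) : BraceT p s l nn :=
  (fun i => x.1 i + ((x.2 i).val • c i) (y.1 i), x.2 + y.2)

/-- `α_μ(u₁,…,u_s,a₁,…,a_s) = (f₁^μ(u₁),…,f_s^μ(u_s), γ₁^μ·a₁,…, γ_s^μ·a_s)`. -/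
def braceAlpha {p s : ℕ} {l nn : Fin s → ℕ}
    (f : ∀ i : Fin s, AddAut (BraceVec p (nn i)))
    (γ : ∀ i : Fin s, (ZMod (l i))ˣ)
    (μ : ZMod p) (x : BraceT p s l nn) : BraceT p s l nn :=
  (fun i => (μ.val • f i) (x.1 i), fun i => ((γ i : ZMod (l i)) ^ μ.val) * x.2 i)

/-- The underlying set of the asymmetric product `B = T ⋊∘ Z/(p)`. -/
abbrev BraceB (p s : ℕ) (l nn : Fin s → ℕ) : Type := BraceT p s l nn × ZMod p

/-- The symmetric bilinear form `b((u,a),(v,a')) = Σ_{i} b_i(u_i,v_i)` on `T`. -/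
def braceBil {p s : ℕ} {l nn : Fin s → ℕ}
    (bi : ∀ i : Fin s, BraceVec p (nn i) → BraceVec p (nn i) → ZMod p)
    (x y : BraceT p s l nn) : ZMod p :=
  ∑ i : Fin s, bi i (x.1 i) (y.1 i)

/-- Addition of the asymmetric product `B = T ⋊∘ Z/(p)`. -/
def braceBadd {p s : ℕ} {l nn : Fin s → ℕ}
    (bi : ∀ i : Fin s, BraceVec p (nn i) → BraceVec p (nn i) → ZMod p)
    (x y : BraceB p s l nn) : BraceB p s l nn :=
  (x.1 + y.1, x.2 + y.2 + braceBil bi x.1 y.1)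

/-- Additive inverse in the asymmetric product `B = T ⋊∘ Z/(p)`. -/
def braceBneg {p s : ℕ} {l nn : Fin s → ℕ}
    (bi : ∀ i : Fin s, BraceVec p (nn i) → BraceVec p (nn i) → ZMod p)
    (x : BraceB p s l nn) : BraceB p s l nn :=
  (-x.1, -x.2 - braceBil bi x.1 (-x.1))

/-- Multiplication of the asymmetric product `B = T ⋊∘ Z/(p)`. -/
def braceBmul {p s : ℕ} {l nn : Fin s → ℕ}
    (c f : ∀ i : Fin s, AddAut (BraceVec p (nn i)))
    (γ : ∀ i : Fin s, (ZMod (l i))ˣ)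
    (x y : BraceB p s l nn) : BraceB p s l nn :=
  (braceTmul c x.1 (braceAlpha f γ x.2 y.1), x.2 + y.2)

/-- An ideal of the left brace `B = T ⋊∘ Z/(p)`: a normal subgroup of `(B,·)` closed
under all the lambda maps `λ_a(x) = a·x − a`.  (Closure under multiplicative inverses
and conjugation is phrased via the defining equation of the inverse.) -/
def IsIdealBraceB {p s : ℕ} {l nn : Fin s → ℕ}
    (bi : ∀ i : Fin s, BraceVec p (nn i) → BraceVec p (nn i) → ZMod p)
    (c f : ∀ i : Fin s, AddAut (BraceVec p (nn i)))
    (γ : ∀ i : Fin s, (ZMod (l i))ˣ)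
    (N : Set (BraceB p s l nn)) : Prop :=
  ((0 : BraceT p s l nn), (0 : ZMod p)) ∈ N ∧
  (∀ x ∈ N, ∀ y ∈ N, braceBmul c f γ x y ∈ N) ∧
  (∀ x ∈ N, ∀ y : BraceB p s l nn,
      braceBmul c f γ x y = ((0 : BraceT p s l nn), (0 : ZMod p)) → y ∈ N) ∧
  (∀ g : BraceB p s l nn, ∀ x ∈ N, ∀ g' : BraceB p s l nn,
      braceBmul c f γ g g' = ((0 : BraceT p s l nn), (0 : ZMod p)) →
      braceBmul c f γ (braceBmul c f γ g x) g' ∈ N) ∧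
  (∀ a : BraceB p s l nn, ∀ x ∈ N,
      braceBadd bi (braceBmul c f γ a x) (braceBneg bi a) ∈ N)

section Aux

lemma brValCast {m : ℕ} [NeZero m] (a : ZMod m) : ((a.val : ℕ) : ZMod m) = a :=
  ZMod.natCast_rightInverse a

lemma brPowCongr {G : Type*} [Group G] (x : G) {m : ℕ} (h : orderOf x = m)
    {j k : ℕ} (hjk : (j : ZMod m) = (k : ZMod m)) : x ^ j = x ^ k := by
  refine pow_eq_pow_iff_modEq.mpr ?_
  rw [h]
  exact (ZMod.natCast_eq_natCast_iff _ _ _).mp hjk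

lemma brCommPow {G : Type*} [Group G] {x y : G} {r : ℕ} (h : x * y = y ^ r * x) :
    ∀ m k : ℕ, x ^ m * y ^ k = y ^ (r ^ m * k) * x ^ m := by
  have base : ∀ k : ℕ, x * y ^ k = y ^ (r * k) * x := by
    intro k
    induction k with
    | zero => simp
    | succ k ih =>
      rw [pow_succ, ← mul_assoc, ih, mul_assoc, h, ← mul_assoc, ← pow_add, Nat.mul_succ]
  intro m
  induction m with
  | zero => simp
  | succ m ih =>
    intro k
    have e : r * (r ^ m * k) = r ^ (m + 1) * k := by ring
    rw [pow_succ', mul_assoc, ih k, ← mul_assoc, base, mul_assoc, ← pow_succ', e]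

lemma brNsmulCongr {G : Type*} [AddGroup G] (x : G) {m : ℕ} (h : addOrderOf x = m)
    {j k : ℕ} (hjk : (j : ZMod m) = (k : ZMod m)) : j • x = k • x := by
  refine nsmul_eq_nsmul_iff_modEq.mpr ?_
  rw [h]
  exact (ZMod.natCast_eq_natCast_iff _ _ _).mp hjk

lemma brCommNsmul {G : Type*} [AddGroup G] {x y : G} {r : ℕ} (h : x + y = r • y + x) :
    ∀ m k : ℕ, m • x + k • y = (r ^ m * k) • y + m • x := by
  have base : ∀ k : ℕ, x + k • y = (r * k) • y + x := by
    intro k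
    induction k with
    | zero => simp
    | succ k ih =>
      rw [succ_nsmul, ← add_assoc, ih, add_assoc, h, ← add_assoc, ← add_nsmul, Nat.mul_succ]
  intro m
  induction m with
  | zero => simp
  | succ m ih =>
    intro k
    have e : r * (r ^ m * k) = r ^ (m + 1) * k := by ring
    rw [succ_nsmul', add_assoc, ih k, ← add_assoc, base, add_assoc, ← succ_nsmul', e]

end Aux

section Main

variable {p s : ℕ} {l nn : Fin s → ℕ}
  (c f : ∀ i : Fin s, AddAut (BraceVec p (nn i)))
  (γ : ∀ i : Fin s, (ZMod (l i))ˣ)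
  (bi : ∀ i : Fin s, BraceVec p (nn i) → BraceVec p (nn i) → ZMod p)

lemma brCpowAdd (hl : ∀ i, 1 < l i) (hco : ∀ i, addOrderOf (c i) = l i) (i : Fin s)
    (a b : ZMod (l i)) : ((a + b).val • c i) = (a.val • c i) + (b.val • c i) := by
  haveI : NeZero (l i) := ⟨by have := hl i; omega⟩
  rw [← add_nsmul]
  exact brNsmulCongr _ (hco i) (by push_cast [brValCast]; ring)

lemma brFpowAdd (hp : p.Prime) (hfo : ∀ i, addOrderOf (f i) = p) (i : Fin s)
    (a b : ZMod p) : ((a + b).val • f i) = (a.val • f i) + (b.val • f i) := by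
  haveI : NeZero p := ⟨hp.ne_zero⟩
  rw [← add_nsmul]
  exact brNsmulCongr _ (hfo i) (by push_cast [brValCast]; ring)

lemma brGpowAdd (hp : p.Prime) (hγo : ∀ i, orderOf (γ i) = p) (i : Fin s)
    (a b : ZMod p) : ((γ i : ZMod (l i)) ^ (a + b).val) =
      (γ i : ZMod (l i)) ^ a.val * (γ i : ZMod (l i)) ^ b.val := by
  haveI : NeZero p := ⟨hp.ne_zero⟩
  have : (γ i) ^ (a + b).val = (γ i) ^ a.val * (γ i) ^ b.val := by
    rw [← pow_add]
    exact brPowCongr _ (hγo i) (by push_cast [brValCast]; ring)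
  exact_mod_cast congrArg (Units.val) this

/-- the key commutation rule in `ZMod` exponent form. -/
lemma brFcComm (hl : ∀ i, 1 < l i) (hco : ∀ i, addOrderOf (c i) = l i)
    (hcomm : ∀ i, f i + c i = (((γ i : ZMod (l i)).val) • c i) + f i) (i : Fin s)
    (μ : ZMod p) (a : ZMod (l i)) :
    (μ.val • f i) + (a.val • c i) = ((((γ i : ZMod (l i)) ^ μ.val) * a).val • c i) + (μ.val • f i) := by
  haveI : NeZero (l i) := ⟨by have := hl i; omega⟩
  rw [brCommNsmul (hcomm i) μ.val a.val]
  congr 1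
  refine brNsmulCongr _ (hco i) ?_
  push_cast [brValCast]
  ring

end Main
section Main2

variable {p s : ℕ} {l nn : Fin s → ℕ}
  (c f : ∀ i : Fin s, AddAut (BraceVec p (nn i)))
  (γ : ∀ i : Fin s, (ZMod (l i))ˣ)
  (bi : ∀ i : Fin s, BraceVec p (nn i) → BraceVec p (nn i) → ZMod p)

lemma brCpowCancel (hl : ∀ i, 1 < l i) (hco : ∀ i, addOrderOf (c i) = l i) (i : Fin s)
    (a : ZMod (l i)) (z : BraceVec p (nn i)) :
    ((a.val • c i)) ((((-a).val • c i)) z) = z := by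
  haveI : NeZero (l i) := ⟨by have := hl i; omega⟩
  rw [← AddAut.add_apply, ← brCpowAdd c hl hco, add_neg_cancel, ZMod.val_zero, zero_nsmul]
  rfl

lemma brFpowCancel (hp : p.Prime) (hfo : ∀ i, addOrderOf (f i) = p) (i : Fin s)
    (μ : ZMod p) (z : BraceVec p (nn i)) :
    ((μ.val • f i)) ((((-μ).val • f i)) z) = z := by
  haveI : NeZero p := ⟨hp.ne_zero⟩
  rw [← AddAut.add_apply, ← brFpowAdd f hp hfo, add_neg_cancel, ZMod.val_zero, zero_nsmul]
  rfl

lemma brGpowCancel (hp : p.Prime) (hγo : ∀ i, orderOf (γ i) = p) (i : Fin s)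
    (μ : ZMod p) (t : ZMod (l i)) :
    ((γ i : ZMod (l i)) ^ μ.val) * (((γ i : ZMod (l i)) ^ (-μ).val) * t) = t := by
  haveI : NeZero p := ⟨hp.ne_zero⟩
  rw [← mul_assoc, ← brGpowAdd γ hp hγo, add_neg_cancel, ZMod.val_zero, pow_zero, one_mul]

/-- The multiplicative inverse in `B`. -/
def brInv (x : BraceB p s l nn) : BraceB p s l nn :=
  ((fun i => (((-x.2).val • f i)) ((((-(x.1.2 i)).val • c i)) (-(x.1.1 i))),
    fun i => -(((γ i : ZMod (l i)) ^ (-x.2).val) * x.1.2 i)), -x.2)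

lemma brMulInv (hp : p.Prime) (hl : ∀ i, 1 < l i)
    (hfo : ∀ i, addOrderOf (f i) = p) (hco : ∀ i, addOrderOf (c i) = l i)
    (hγo : ∀ i, orderOf (γ i) = p) (x : BraceB p s l nn) :
    braceBmul c f γ x (brInv c f γ x) = ((0 : BraceT p s l nn), (0 : ZMod p)) := by
  obtain ⟨⟨u, a⟩, μ⟩ := x
  simp only [braceBmul, braceTmul, braceAlpha, brInv, Prod.mk.injEq, Prod.ext_iff,
    funext_iff, Prod.fst_zero, Prod.snd_zero, Pi.zero_apply, Pi.add_apply]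
  refine ⟨⟨fun i => ?_, fun i => ?_⟩, by simp⟩
  · rw [brFpowCancel f hp hfo, brCpowCancel c hl hco]
    simp
  · rw [mul_neg, brGpowCancel γ hp hγo]
    simp

end Main2
section Main3

variable {p s : ℕ} {l nn : Fin s → ℕ}
  (c f : ∀ i : Fin s, AddAut (BraceVec p (nn i)))
  (γ : ∀ i : Fin s, (ZMod (l i))ˣ)
  (bi : ∀ i : Fin s, BraceVec p (nn i) → BraceVec p (nn i) → ZMod p)

lemma brBz (hbadd : ∀ i, ∀ u u' v : BraceVec p (nn i), bi i (u + u') v = bi i u v + bi i u' v)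
    (i : Fin s) (v : BraceVec p (nn i)) : bi i 0 v = 0 := by
  have h := hbadd i 0 0 v
  simp only [add_zero, zero_add] at h
  exact (left_eq_add.mp h)

lemma brBzr (hbsymm : ∀ i, ∀ u v : BraceVec p (nn i), bi i u v = bi i v u)
    (hbadd : ∀ i, ∀ u u' v : BraceVec p (nn i), bi i (u + u') v = bi i u v + bi i u' v)
    (i : Fin s) (v : BraceVec p (nn i)) : bi i v 0 = 0 := by
  rw [hbsymm]; exact brBz bi hbadd i v

lemma brBnegRight (hbsymm : ∀ i, ∀ u v : BraceVec p (nn i), bi i u v = bi i v u)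
    (hbadd : ∀ i, ∀ u u' v : BraceVec p (nn i), bi i (u + u') v = bi i u v + bi i u' v)
    (i : Fin s) (u v : BraceVec p (nn i)) : bi i u (-v) = -bi i u v := by
  have h : bi i u (v + -v) = bi i u v + bi i u (-v) := by
    rw [hbsymm i u (v + -v), hbadd, hbsymm i v u, hbsymm i (-v) u]
  rw [add_neg_cancel, brBzr bi hbsymm hbadd] at h
  linear_combination -h

lemma brBcpow (hbc : ∀ i, ∀ u v : BraceVec p (nn i), bi i (c i u) (c i v) = bi i u v)
    (i : Fin s) (k : ℕ) (u v : BraceVec p (nn i)) :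
    bi i (((k • c i)) u) (((k • c i)) v) = bi i u v := by
  induction k with
  | zero => simp
  | succ k ih =>
    rw [succ_nsmul', AddAut.add_apply, AddAut.add_apply, hbc, ih]

lemma brBfpow (hbf : ∀ i, ∀ u v : BraceVec p (nn i), bi i (f i u) (f i v) = bi i u v)
    (i : Fin s) (k : ℕ) (u v : BraceVec p (nn i)) :
    bi i (((k • f i)) u) (((k • f i)) v) = bi i u v := by
  induction k with
  | zero => simp
  | succ k ih =>
    rw [succ_nsmul', AddAut.add_apply, AddAut.add_apply, hbf, ih]

/-- the operator identity `c^{-γ^{-μ}a} ∘ f^{-μ} = f^{-μ} ∘ c^{-a}`. -/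
lemma brOpId (hl : ∀ i, 1 < l i) (hco : ∀ i, addOrderOf (c i) = l i)
    (hcomm : ∀ i, f i + c i = (((γ i : ZMod (l i)).val) • c i) + f i) (i : Fin s)
    (μ : ZMod p) (aa : ZMod (l i)) (z : BraceVec p (nn i)) :
    (((-(((γ i : ZMod (l i)) ^ (-μ).val) * aa)).val • c i)) ((((-μ).val • f i)) z)
      = (((-μ).val • f i)) ((((-aa).val • c i)) z) := by
  rw [← AddAut.add_apply, ← AddAut.add_apply, brFcComm c f γ hl hco hcomm i (-μ) (-aa),
    mul_neg]

end Main3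
section Main4

variable {p s : ℕ} {l nn : Fin s → ℕ}
  (c f : ∀ i : Fin s, AddAut (BraceVec p (nn i)))
  (γ : ∀ i : Fin s, (ZMod (l i))ˣ)
  (bi : ∀ i : Fin s, BraceVec p (nn i) → BraceVec p (nn i) → ZMod p)

/-- Closed formula for the lambda map `g·x − g`. -/
lemma brLamEq
    (hbsymm : ∀ i, ∀ u v : BraceVec p (nn i), bi i u v = bi i v u)
    (hbadd : ∀ i, ∀ u u' v : BraceVec p (nn i), bi i (u + u') v = bi i u v + bi i u' v)
    (g x : BraceB p s l nn) :
    braceBadd bi (braceBmul c f γ g x) (braceBneg bi g)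
      = ((fun i => (((g.1.2 i).val • c i)) (((g.2.val • f i)) (x.1.1 i)),
          fun i => ((γ i : ZMod (l i)) ^ g.2.val) * x.1.2 i),
         x.2 - ∑ i, bi i ((((g.1.2 i).val • c i)) (((g.2.val • f i)) (x.1.1 i))) (g.1.1 i)) := by
  obtain ⟨⟨w, α⟩, ν⟩ := g
  obtain ⟨⟨v, aa⟩, μ⟩ := x
  refine Prod.ext (Prod.ext (funext fun i => ?_) (funext fun i => ?_)) ?_
  · show w i + (((α i).val • c i)) (((ν.val • f i)) (v i)) + -(w i)
      = (((α i).val • c i)) (((ν.val • f i)) (v i))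
    abel
  · show α i + ((γ i : ZMod (l i)) ^ ν.val) * aa i + -(α i)
      = ((γ i : ZMod (l i)) ^ ν.val) * aa i
    abel
  · show ν + μ + (-ν - ∑ i, bi i (w i) (-(w i)))
        + ∑ i, bi i (w i + (((α i).val • c i)) (((ν.val • f i)) (v i))) (-(w i))
      = μ - ∑ i, bi i ((((α i).val • c i)) (((ν.val • f i)) (v i))) (w i)
    have hsplit : ∑ i, bi i (w i + (((α i).val • c i)) (((ν.val • f i)) (v i))) (-(w i))
        = (∑ i, bi i (w i) (-(w i)))
          + ∑ i, bi i ((((α i).val • c i)) (((ν.val • f i)) (v i))) (-(w i)) := by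
      rw [← Finset.sum_add_distrib]
      exact Finset.sum_congr rfl fun i _ => hbadd i _ _ _
    rw [hsplit]
    simp only [brBnegRight bi hbsymm hbadd]
    simp only [Finset.sum_neg_distrib]
    ring

/-- `c^{a} f^{μ} c^{-γ^{-μ}a} f^{-μ} = 1`. -/
lemma brK1 (hp : p.Prime) (hl : ∀ i, 1 < l i)
    (hfo : ∀ i, addOrderOf (f i) = p) (hco : ∀ i, addOrderOf (c i) = l i)
    (hcomm : ∀ i, f i + c i = (((γ i : ZMod (l i)).val) • c i) + f i) (i : Fin s)
    (μ : ZMod p) (aa : ZMod (l i)) (z : BraceVec p (nn i)) :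
    ((aa.val • c i)) (((μ.val • f i))
      ((((-(((γ i : ZMod (l i)) ^ (-μ).val) * aa)).val • c i)) ((((-μ).val • f i)) z)))
      = z := by
  rw [brOpId c f γ hl hco hcomm, brFpowCancel f hp hfo, brCpowCancel c hl hco]

lemma brZeroBadd
    (hbadd : ∀ i, ∀ u u' v : BraceVec p (nn i), bi i (u + u') v = bi i u v + bi i u' v)
    (y : BraceB p s l nn) :
    braceBadd bi ((0 : BraceT p s l nn), (0 : ZMod p)) y = y := by
  obtain ⟨⟨v, aa⟩, μ⟩ := y
  refine Prod.ext (Prod.ext (funext fun i => ?_) (funext fun i => ?_)) ?_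
  · show 0 + v i = v i
    simp
  · show 0 + aa i = aa i
    simp
  · show 0 + μ + ∑ i, bi i 0 (v i) = μ
    simp [brBz bi hbadd]

end Main4
section Main5

variable {p s : ℕ} {l nn : Fin s → ℕ}
  (c f : ∀ i : Fin s, AddAut (BraceVec p (nn i)))
  (γ : ∀ i : Fin s, (ZMod (l i))ˣ)
  (bi : ∀ i : Fin s, BraceVec p (nn i) → BraceVec p (nn i) → ZMod p)

lemma brMulLam (hp : p.Prime) (hl : ∀ i, 1 < l i)
    (hfo : ∀ i, addOrderOf (f i) = p) (hco : ∀ i, addOrderOf (c i) = l i)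
    (hγo : ∀ i, orderOf (γ i) = p)
    (hcomm : ∀ i, f i + c i = (((γ i : ZMod (l i)).val) • c i) + f i)
    (hbsymm : ∀ i, ∀ u v : BraceVec p (nn i), bi i u v = bi i v u)
    (hbadd : ∀ i, ∀ u u' v : BraceVec p (nn i), bi i (u + u') v = bi i u v + bi i u' v)
    (hbc : ∀ i, ∀ u v : BraceVec p (nn i), bi i (c i u) (c i v) = bi i u v)
    (hbf : ∀ i, ∀ u v : BraceVec p (nn i), bi i (f i u) (f i v) = bi i u v)
    (x y : BraceB p s l nn) :
    braceBmul c f γ x (braceBadd bi (braceBmul c f γ (brInv c f γ x) y)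
        (braceBneg bi (brInv c f γ x)))
      = braceBadd bi x y := by
  obtain ⟨⟨u, a⟩, μ⟩ := x
  obtain ⟨⟨v, b⟩, ν⟩ := y
  rw [brLamEq c f γ bi hbsymm hbadd]
  refine Prod.ext (Prod.ext (funext fun i => ?_) (funext fun i => ?_)) ?_
  · show u i + (((a i).val • c i)) (((μ.val • f i))
        ((((-(((γ i : ZMod (l i)) ^ (-μ).val) * a i)).val • c i)) ((((-μ).val • f i)) (v i))))
      = u i + v i
    rw [brK1 c f γ hp hl hfo hco hcomm]
  · show a i + ((γ i : ZMod (l i)) ^ μ.val) * (((γ i : ZMod (l i)) ^ (-μ).val) * b i)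
      = a i + b i
    rw [brGpowCancel γ hp hγo]
  · show μ + (ν - ∑ i, bi i
        ((((-(((γ i : ZMod (l i)) ^ (-μ).val) * a i)).val • c i)) ((((-μ).val • f i)) (v i)))
        ((((-μ).val • f i)) ((((-(a i)).val • c i)) (-(u i)))))
      = μ + ν + ∑ i, bi i (u i) (v i)
    have hterm : ∀ i : Fin s, bi i
        ((((-(((γ i : ZMod (l i)) ^ (-μ).val) * a i)).val • c i)) ((((-μ).val • f i)) (v i)))
        ((((-μ).val • f i)) ((((-(a i)).val • c i)) (-(u i)))) = -(bi i (u i) (v i)) := by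
      intro i
      rw [brOpId c f γ hl hco hcomm, map_neg, map_neg, brBnegRight bi hbsymm hbadd,
        brBfpow f bi hbf, brBcpow c bi hbc, hbsymm]
    rw [Finset.sum_congr rfl (fun i _ => hterm i)]
    simp only [Finset.sum_neg_distrib]
    ring

variable {N : Set (BraceB p s l nn)}

lemma brInvMem (hp : p.Prime) (hl : ∀ i, 1 < l i)
    (hfo : ∀ i, addOrderOf (f i) = p) (hco : ∀ i, addOrderOf (c i) = l i)
    (hγo : ∀ i, orderOf (γ i) = p)
    (hN : IsIdealBraceB bi c f γ N) {x : BraceB p s l nn} (hx : x ∈ N) :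
    brInv c f γ x ∈ N :=
  hN.2.2.1 x hx _ (brMulInv c f γ hp hl hfo hco hγo x)

lemma brNegMem (hp : p.Prime) (hl : ∀ i, 1 < l i)
    (hfo : ∀ i, addOrderOf (f i) = p) (hco : ∀ i, addOrderOf (c i) = l i)
    (hγo : ∀ i, orderOf (γ i) = p)
    (hbadd : ∀ i, ∀ u u' v : BraceVec p (nn i), bi i (u + u') v = bi i u v + bi i u' v)
    (hN : IsIdealBraceB bi c f γ N) {x : BraceB p s l nn} (hx : x ∈ N) :
    braceBneg bi x ∈ N := by
  have h := hN.2.2.2.2 x (brInv c f γ x) (brInvMem c f γ bi hp hl hfo hco hγo hN hx)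
  rwa [brMulInv c f γ hp hl hfo hco hγo, brZeroBadd bi hbadd] at h

lemma brAddMem (hp : p.Prime) (hl : ∀ i, 1 < l i)
    (hfo : ∀ i, addOrderOf (f i) = p) (hco : ∀ i, addOrderOf (c i) = l i)
    (hγo : ∀ i, orderOf (γ i) = p)
    (hcomm : ∀ i, f i + c i = (((γ i : ZMod (l i)).val) • c i) + f i)
    (hbsymm : ∀ i, ∀ u v : BraceVec p (nn i), bi i u v = bi i v u)
    (hbadd : ∀ i, ∀ u u' v : BraceVec p (nn i), bi i (u + u') v = bi i u v + bi i u' v)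
    (hbc : ∀ i, ∀ u v : BraceVec p (nn i), bi i (c i u) (c i v) = bi i u v)
    (hbf : ∀ i, ∀ u v : BraceVec p (nn i), bi i (f i u) (f i v) = bi i u v)
    (hN : IsIdealBraceB bi c f γ N) {x y : BraceB p s l nn}
    (hx : x ∈ N) (hy : y ∈ N) : braceBadd bi x y ∈ N := by
  have h5 := hN.2.2.2.2 (brInv c f γ x) y hy
  have h2 := hN.2.1 x hx _ h5
  rwa [brMulLam c f γ bi hp hl hfo hco hγo hcomm hbsymm hbadd hbc hbf] at h2

end Main5
section Main6

variable {p s : ℕ} {l nn : Fin s → ℕ}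
  (c f : ∀ i : Fin s, AddAut (BraceVec p (nn i)))
  (γ : ∀ i : Fin s, (ZMod (l i))ˣ)
  (bi : ∀ i : Fin s, BraceVec p (nn i) → BraceVec p (nn i) → ZMod p)
  {N : Set (BraceB p s l nn)}

/-- From one central element `((0,0),t)` with `t ≠ 0`, all `((0,0),t')` lie in `N`. -/
lemma brZmulMem (hp : p.Prime) (hl : ∀ i, 1 < l i)
    (hfo : ∀ i, addOrderOf (f i) = p) (hco : ∀ i, addOrderOf (c i) = l i)
    (hγo : ∀ i, orderOf (γ i) = p)
    (hcomm : ∀ i, f i + c i = (((γ i : ZMod (l i)).val) • c i) + f i)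
    (hbsymm : ∀ i, ∀ u v : BraceVec p (nn i), bi i u v = bi i v u)
    (hbadd : ∀ i, ∀ u u' v : BraceVec p (nn i), bi i (u + u') v = bi i u v + bi i u' v)
    (hbc : ∀ i, ∀ u v : BraceVec p (nn i), bi i (c i u) (c i v) = bi i u v)
    (hbf : ∀ i, ∀ u v : BraceVec p (nn i), bi i (f i u) (f i v) = bi i u v)
    (hN : IsIdealBraceB bi c f γ N) {t : ZMod p}
    (ht : ((0 : BraceT p s l nn), t) ∈ N) (htne : t ≠ 0) (t' : ZMod p) :
    ((0 : BraceT p s l nn), t') ∈ N := by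
  haveI : Fact p.Prime := ⟨hp⟩
  have hsum : ∀ k : ℕ, ((0 : BraceT p s l nn), (k : ZMod p) * t) ∈ N := by
    intro k
    induction k with
    | zero => simpa using hN.1
    | succ k ih =>
      have hm := brAddMem c f γ bi hp hl hfo hco hγo hcomm hbsymm hbadd hbc hbf hN ih ht
      have he : braceBadd bi ((0 : BraceT p s l nn), (k : ZMod p) * t)
          ((0 : BraceT p s l nn), t) = ((0 : BraceT p s l nn), ((k : ℕ) + 1 : ZMod p) * t) := by
        refine Prod.ext (by simp [braceBadd]) ?_
        show (k : ZMod p) * t + t + ∑ i, bi i ((0 : BraceT p s l nn).1 i) _ = _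
        simp only [Prod.fst_zero, Pi.zero_apply, brBz bi hbadd, Finset.sum_const_zero]
        push_cast
        ring
      rw [he] at hm
      push_cast
      exact hm
  have h := hsum (t' * t⁻¹).val
  rwa [brValCast, mul_assoc, inv_mul_cancel₀ htne, mul_one] at h

/-- λ by `((z,0),0)` : adjust the last component. -/
lemma brElLam (hp : p.Prime) (hl : ∀ i, 1 < l i)
    (hbsymm : ∀ i, ∀ u v : BraceVec p (nn i), bi i u v = bi i v u)
    (hbadd : ∀ i, ∀ u u' v : BraceVec p (nn i), bi i (u + u') v = bi i u v + bi i u' v)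
    (hN : IsIdealBraceB bi c f γ N) {x : BraceB p s l nn} (hx : x ∈ N)
    (z : ∀ i, BraceVec p (nn i)) :
    (x.1, x.2 - ∑ i, bi i (x.1.1 i) (z i)) ∈ N := by
  haveI : NeZero p := ⟨hp.ne_zero⟩
  have h := hN.2.2.2.2 ((z, (0 : ∀ i, ZMod (l i))), (0 : ZMod p)) x hx
  rw [brLamEq c f γ bi hbsymm hbadd] at h
  simpa only [Pi.zero_apply, ZMod.val_zero, zero_nsmul, AddAut.zero_apply, one_mul, pow_zero] using h

/-- conjugation by `((w,0),0)`. -/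
lemma brElConj (hp : p.Prime) (hl : ∀ i, 1 < l i)
    (hN : IsIdealBraceB bi c f γ N) {x : BraceB p s l nn} (hx : x ∈ N)
    (w : ∀ i, BraceVec p (nn i)) :
    ((fun i => w i + x.1.1 i + (((x.1.2 i).val • c i)) (((x.2.val • f i)) (-(w i))), x.1.2),
      x.2) ∈ N := by
  haveI : NeZero p := ⟨hp.ne_zero⟩
  have hinv : braceBmul c f γ ((w, (0 : ∀ i, ZMod (l i))), (0 : ZMod p))
      ((-w, (0 : ∀ i, ZMod (l i))), (0 : ZMod p))
      = ((0 : BraceT p s l nn), (0 : ZMod p)) := by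
    refine Prod.ext (Prod.ext (funext fun i => ?_) (funext fun i => ?_)) (by simp [braceBmul])
    · show w i + ((((0 : ZMod (l i))).val • c i)) (((((0:ZMod p)).val • f i)) ((-w) i)) = _
      simp [ZMod.val_zero]
    · show (0 : ZMod (l i)) + ((γ i : ZMod (l i)) ^ ((0:ZMod p)).val) * 0 = _
      simp
  have h := hN.2.2.2.1 ((w, (0 : ∀ i, ZMod (l i))), (0 : ZMod p)) x hx
      ((-w, (0 : ∀ i, ZMod (l i))), (0 : ZMod p)) hinv
  obtain ⟨⟨v, aa⟩, μ⟩ := x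
  have he : braceBmul c f γ (braceBmul c f γ ((w, (0 : ∀ i, ZMod (l i))), (0 : ZMod p))
      ((v, aa), μ)) ((-w, (0 : ∀ i, ZMod (l i))), (0 : ZMod p))
      = ((fun i => w i + v i + (((aa i).val • c i)) (((μ.val • f i)) (-(w i))), aa), μ) := by
    refine Prod.ext (Prod.ext (funext fun i => ?_) (funext fun i => ?_)) (by simp [braceBmul])
    · show (w i + ((((0 : ZMod (l i))).val • c i)) (((((0:ZMod p)).val • f i)) (v i)))
          + (((((0 : ∀ i, ZMod (l i)) + fun i => ((γ i : ZMod (l i)) ^ ((0:ZMod p)).val) * aa i) i).val • c i))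
            ((((((0:ZMod p)) + μ).val • f i)) ((-w) i)) = _
      simp [ZMod.val_zero]
    · show ((0 : ∀ i, ZMod (l i)) + fun i => ((γ i : ZMod (l i)) ^ ((0:ZMod p)).val) * aa i) i
          + ((γ i : ZMod (l i)) ^ (((0:ZMod p)) + μ).val) * 0 = aa i
      simp
  rwa [he] at h

end Main6
section Main7

variable {p s : ℕ} {l nn : Fin s → ℕ}
  (c f : ∀ i : Fin s, AddAut (BraceVec p (nn i)))
  (γ : ∀ i : Fin s, (ZMod (l i))ˣ)
  (bi : ∀ i : Fin s, BraceVec p (nn i) → BraceVec p (nn i) → ZMod p)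
  {N : Set (BraceB p s l nn)}

/-- conjugating `ζ = ((0,0),1)` by `((0,α),0)`. -/
lemma brElConjZeta (hp : p.Prime) (hl : ∀ i, 1 < l i)
    (hN : IsIdealBraceB bi c f γ N)
    (hz : ((0 : BraceT p s l nn), (1 : ZMod p)) ∈ N) (α : ∀ i, ZMod (l i)) :
    (((0 : ∀ i, BraceVec p (nn i)), fun i => α i - (γ i : ZMod (l i)) * α i),
      (1 : ZMod p)) ∈ N := by
  haveI : NeZero p := ⟨hp.ne_zero⟩
  haveI : Fact (1 < p) := ⟨hp.one_lt⟩
  have hinv : braceBmul c f γ (((0 : ∀ i, BraceVec p (nn i)), α), (0 : ZMod p))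
      (((0 : ∀ i, BraceVec p (nn i)), -α), (0 : ZMod p))
      = ((0 : BraceT p s l nn), (0 : ZMod p)) := by
    refine Prod.ext (Prod.ext (funext fun i => ?_) (funext fun i => ?_)) (by simp [braceBmul])
    · show (0 : ∀ i, BraceVec p (nn i)) i
          + (((α i).val • c i)) (((((0 : ZMod p)).val • f i)) ((0 : ∀ i, BraceVec p (nn i)) i)) = _
      simp
    · show α i + ((γ i : ZMod (l i)) ^ ((0 : ZMod p)).val) * ((-α) i) = _
      simp [ZMod.val_zero]
  have h := hN.2.2.2.1 (((0 : ∀ i, BraceVec p (nn i)), α), (0 : ZMod p))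
      ((0 : BraceT p s l nn), (1 : ZMod p)) hz
      (((0 : ∀ i, BraceVec p (nn i)), -α), (0 : ZMod p)) hinv
  have he : braceBmul c f γ (braceBmul c f γ (((0 : ∀ i, BraceVec p (nn i)), α), (0 : ZMod p))
      ((0 : BraceT p s l nn), (1 : ZMod p)))
      (((0 : ∀ i, BraceVec p (nn i)), -α), (0 : ZMod p))
      = (((0 : ∀ i, BraceVec p (nn i)), fun i => α i - (γ i : ZMod (l i)) * α i),
        (1 : ZMod p)) := by
    refine Prod.ext (Prod.ext (funext fun i => ?_) (funext fun i => ?_)) (by simp [braceBmul])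
    · show ((0 : ∀ i, BraceVec p (nn i)) i
            + (((α i).val • c i)) (((((0 : ZMod p)).val • f i)) ((0 : BraceT p s l nn).1 i)))
          + ((((α + fun i => ((γ i : ZMod (l i)) ^ ((0 : ZMod p)).val)
              * (0 : BraceT p s l nn).2 i) i).val • c i))
            ((((((0 : ZMod p)) + 1).val • f i)) ((0 : ∀ i, BraceVec p (nn i)) i)) = _
      simp
    · show ((α + fun i => ((γ i : ZMod (l i)) ^ ((0 : ZMod p)).val)
            * (0 : BraceT p s l nn).2 i) i)
          + ((γ i : ZMod (l i)) ^ (((0 : ZMod p)) + 1).val) * ((-α) i)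
          = α i - (γ i : ZMod (l i)) * α i
      simp [ZMod.val_zero, ZMod.val_one]
      ring
  rwa [he] at h

/-- all `((0,β),0)` lie in `N` once `ζ ∈ N` (using that `γᵢ − 1` is invertible). -/
lemma brBetaMem (hp : p.Prime) (hl : ∀ i, 1 < l i)
    (hfo : ∀ i, addOrderOf (f i) = p) (hco : ∀ i, addOrderOf (c i) = l i)
    (hγo : ∀ i, orderOf (γ i) = p)
    (hcomm : ∀ i, f i + c i = (((γ i : ZMod (l i)).val) • c i) + f i)
    (hγ1 : ∀ i, IsUnit ((γ i : ZMod (l i)) - 1))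
    (hbsymm : ∀ i, ∀ u v : BraceVec p (nn i), bi i u v = bi i v u)
    (hbadd : ∀ i, ∀ u u' v : BraceVec p (nn i), bi i (u + u') v = bi i u v + bi i u' v)
    (hbc : ∀ i, ∀ u v : BraceVec p (nn i), bi i (c i u) (c i v) = bi i u v)
    (hbf : ∀ i, ∀ u v : BraceVec p (nn i), bi i (f i u) (f i v) = bi i u v)
    (hN : IsIdealBraceB bi c f γ N)
    (hz : ((0 : BraceT p s l nn), (1 : ZMod p)) ∈ N) (β : ∀ i, ZMod (l i)) :
    (((0 : ∀ i, BraceVec p (nn i)), β), (0 : ZMod p)) ∈ N := by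
  choose wu hwu using hγ1
  have h := brElConjZeta c f γ bi hp hl hN hz (fun i => -((↑(wu i)⁻¹ : ZMod (l i)) * β i))
  have hfe : (fun i => -((↑(wu i)⁻¹ : ZMod (l i)) * β i)
      - (γ i : ZMod (l i)) * -((↑(wu i)⁻¹ : ZMod (l i)) * β i)) = β := by
    funext i
    have hg : (γ i : ZMod (l i)) = (wu i : ZMod (l i)) + 1 := by
      linear_combination (hwu i).symm
    have hui : ((wu i : ZMod (l i)) * ((wu i)⁻¹ : (ZMod (l i))ˣ)) = 1 :=
      Units.mul_inv (wu i)
    rw [hg]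
    linear_combination (β i) * hui
  rw [hfe] at h
  -- subtract ζ
  have hd := brAddMem c f γ bi hp hl hfo hco hγo hcomm hbsymm hbadd hbc hbf hN h
    (brNegMem c f γ bi hp hl hfo hco hγo hbadd hN hz)
  have he : braceBadd bi (((0 : ∀ i, BraceVec p (nn i)), β), (1 : ZMod p))
      (braceBneg bi ((0 : BraceT p s l nn), (1 : ZMod p)))
      = (((0 : ∀ i, BraceVec p (nn i)), β), (0 : ZMod p)) := by
    refine Prod.ext (Prod.ext (funext fun i => ?_) (funext fun i => ?_)) ?_
    · show (0 : ∀ i, BraceVec p (nn i)) i + (-(0 : BraceT p s l nn)).1 i = _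
      simp
    · show β i + (-(0 : BraceT p s l nn)).2 i = β i
      simp
    · show (1 : ZMod p) + (-(1 : ZMod p) - braceBil bi (0 : BraceT p s l nn)
          (-(0 : BraceT p s l nn)))
        + braceBil bi ((0 : ∀ i, BraceVec p (nn i)), β) (-(0 : BraceT p s l nn)) = 0
      simp [braceBil, brBz bi hbadd]
  rwa [he] at hd

end Main7
section Main8

variable {p s : ℕ} {l nn : Fin s → ℕ}
  (c f : ∀ i : Fin s, AddAut (BraceVec p (nn i)))
  (γ : ∀ i : Fin s, (ZMod (l i))ˣ)
  (bi : ∀ i : Fin s, BraceVec p (nn i) → BraceVec p (nn i) → ZMod p)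
  {N : Set (BraceB p s l nn)}

/-- If `N` contains an element with nonzero vector part, then `ζ ∈ N`. -/
lemma brZetaOfVec (hp : p.Prime) (hl : ∀ i, 1 < l i)
    (hfo : ∀ i, addOrderOf (f i) = p) (hco : ∀ i, addOrderOf (c i) = l i)
    (hγo : ∀ i, orderOf (γ i) = p)
    (hcomm : ∀ i, f i + c i = (((γ i : ZMod (l i)).val) • c i) + f i)
    (hbsymm : ∀ i, ∀ u v : BraceVec p (nn i), bi i u v = bi i v u)
    (hbadd : ∀ i, ∀ u u' v : BraceVec p (nn i), bi i (u + u') v = bi i u v + bi i u' v)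
    (hbnd : ∀ i, ∀ u : BraceVec p (nn i), (∀ v, bi i u v = 0) → u = 0)
    (hbc : ∀ i, ∀ u v : BraceVec p (nn i), bi i (c i u) (c i v) = bi i u v)
    (hbf : ∀ i, ∀ u v : BraceVec p (nn i), bi i (f i u) (f i v) = bi i u v)
    (hN : IsIdealBraceB bi c f γ N) {x : BraceB p s l nn} (hx : x ∈ N)
    {j : Fin s} (hj : x.1.1 j ≠ 0) :
    ((0 : BraceT p s l nn), (1 : ZMod p)) ∈ N := by
  have hex : ∃ zj, bi j (x.1.1 j) zj ≠ 0 := by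
    by_contra h
    push_neg at h
    exact hj (hbnd j _ fun v => h v)
  obtain ⟨zj, hzj0⟩ := hex
  obtain ⟨z, hzj, hz0⟩ : ∃ z : ∀ i, BraceVec p (nn i),
      bi j (x.1.1 j) (z j) ≠ 0 ∧ ∀ i, i ≠ j → z i = 0 :=
    ⟨(Pi.single j zj : ∀ i, BraceVec p (nn i)), by rwa [Pi.single_eq_same],
      fun i hij => Pi.single_eq_of_ne (M := fun i => BraceVec p (nn i)) hij zj⟩
  have hts : ∑ i, bi i (x.1.1 i) (z i) = bi j (x.1.1 j) (z j) := by
    rw [Finset.sum_eq_single j]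
    · intro i _ hij
      rw [hz0 i hij]
      exact brBzr bi hbsymm hbadd i _
    · exact fun h => absurd (Finset.mem_univ j) h
  have h1 := brElLam c f γ bi hp hl hbsymm hbadd hN hx z
  have h2 := brAddMem c f γ bi hp hl hfo hco hγo hcomm hbsymm hbadd hbc hbf hN h1
    (brNegMem c f γ bi hp hl hfo hco hγo hbadd hN hx)
  have he : braceBadd bi (x.1, x.2 - ∑ i, bi i (x.1.1 i) (z i))
      (braceBneg bi x) = ((0 : BraceT p s l nn), -(bi j (x.1.1 j) (z j))) := by
    refine Prod.ext ?_ ?_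
    · show x.1 + -x.1 = 0
      simp
    · show (x.2 - ∑ i, bi i (x.1.1 i) (z i))
          + (-x.2 - braceBil bi x.1 (-x.1)) + braceBil bi x.1 (-x.1)
        = -(bi j (x.1.1 j) (z j))
      rw [hts]
      ring
  rw [he] at h2
  exact brZmulMem c f γ bi hp hl hfo hco hγo hcomm hbsymm hbadd hbc hbf hN h2
    (neg_ne_zero.mpr hzj) 1

/-- If `N` contains an element with zero vector part but nonzero `A`-part, then `ζ ∈ N`. -/
lemma brZetaOfA (hp : p.Prime) (hl : ∀ i, 1 < l i)
    (hdiv : ∀ q : ℕ, q.Prime → q ∣ ∏ i, l i → p ∣ q - 1)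
    (hfo : ∀ i, addOrderOf (f i) = p) (hco : ∀ i, addOrderOf (c i) = l i)
    (hγo : ∀ i, orderOf (γ i) = p)
    (hcomm : ∀ i, f i + c i = (((γ i : ZMod (l i)).val) • c i) + f i)
    (hbsymm : ∀ i, ∀ u v : BraceVec p (nn i), bi i u v = bi i v u)
    (hbadd : ∀ i, ∀ u u' v : BraceVec p (nn i), bi i (u + u') v = bi i u v + bi i u' v)
    (hbnd : ∀ i, ∀ u : BraceVec p (nn i), (∀ v, bi i u v = 0) → u = 0)
    (hbc : ∀ i, ∀ u v : BraceVec p (nn i), bi i (c i u) (c i v) = bi i u v)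
    (hbf : ∀ i, ∀ u v : BraceVec p (nn i), bi i (f i u) (f i v) = bi i u v)
    (hN : IsIdealBraceB bi c f γ N) {x : BraceB p s l nn} (hx : x ∈ N)
    (hu : x.1.1 = 0) {j : Fin s} (hj : x.1.2 j ≠ 0) :
    ((0 : BraceT p s l nn), (1 : ZMod p)) ∈ N := by
  haveI : NeZero (l j) := ⟨by have := hl j; omega⟩
  by_cases hall : ∃ (w : ∀ i, BraceVec p (nn i)) (i : Fin s),
      w i + x.1.1 i + (((x.1.2 i).val • c i)) (((x.2.val • f i)) (-(w i))) ≠ 0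
  · obtain ⟨w, i0, hne⟩ := hall
    exact brZetaOfVec c f γ bi hp hl hfo hco hγo hcomm hbsymm hbadd hbnd hbc hbf hN
      (brElConj c f γ bi hp hl hN hx w) (j := i0) hne
  · push_neg at hall
    exfalso
    have hfix : ∀ z : BraceVec p (nn j), (((x.1.2 j).val • c j)) (((x.2.val • f j)) z) = z := by
      intro z
      have h := hall (Pi.single j (-z)) j
      rw [hu] at h
      simp only [Pi.single_eq_same, Pi.zero_apply, add_zero, neg_neg] at h
      linear_combination h
    have hfe : (((x.1.2 j).val • c j)) + ((x.2.val • f j)) = 0 := by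
      refine AddEquiv.ext fun z => ?_
      rw [AddAut.add_apply]
      exact hfix z
    have h2 : (((x.1.2 j).val • c j)) = -((x.2.val • f j)) := eq_neg_of_add_eq_zero_left hfe
    have hfp : p • (f j) = 0 := by
      have h4 := addOrderOf_nsmul_eq_zero (f j)
      rwa [hfo j] at h4
    have hc1 : ((x.1.2 j).val * p) • (c j) = 0 := by
      rw [mul_nsmul, h2, neg_nsmul, ← mul_nsmul, Nat.mul_comm, mul_nsmul, hfp, nsmul_zero, neg_zero]
    have hdvd : l j ∣ (x.1.2 j).val * p := by
      have h5 := addOrderOf_dvd_of_nsmul_eq_zero hc1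
      rwa [hco j] at h5
    have hndvd : ¬ p ∣ l j := by
      intro hd
      have h3 := hdiv p hp (dvd_trans hd (Finset.dvd_prod_of_mem l (Finset.mem_univ j)))
      have h4 := Nat.le_of_dvd (by have := hp.two_le; omega) h3
      have := hp.two_le
      omega
    have hcop : Nat.Coprime (l j) p := (Nat.Coprime.symm ((hp.coprime_iff_not_dvd).mpr hndvd))
    have hdvd2 : l j ∣ (x.1.2 j).val := (Nat.Coprime.dvd_of_dvd_mul_right hcop) hdvd
    have hlt : (x.1.2 j).val < l j := ZMod.val_lt _
    have h0 : (x.1.2 j).val = 0 := Nat.eq_zero_of_dvd_of_lt hdvd2 hlt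
    exact hj ((ZMod.val_eq_zero _).mp h0)

end Main8
section Main9

variable {p s : ℕ} {l nn : Fin s → ℕ}
  (c f : ∀ i : Fin s, AddAut (BraceVec p (nn i)))
  (γ : ∀ i : Fin s, (ZMod (l i))ˣ)
  (bi : ∀ i : Fin s, BraceVec p (nn i) → BraceVec p (nn i) → ZMod p)
  {N : Set (BraceB p s l nn)}

lemma brZeta (hp : p.Prime) (hl : ∀ i, 1 < l i)
    (hdiv : ∀ q : ℕ, q.Prime → q ∣ ∏ i, l i → p ∣ q - 1)
    (hfo : ∀ i, addOrderOf (f i) = p) (hco : ∀ i, addOrderOf (c i) = l i)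
    (hγo : ∀ i, orderOf (γ i) = p)
    (hcomm : ∀ i, f i + c i = (((γ i : ZMod (l i)).val) • c i) + f i)
    (hbsymm : ∀ i, ∀ u v : BraceVec p (nn i), bi i u v = bi i v u)
    (hbadd : ∀ i, ∀ u u' v : BraceVec p (nn i), bi i (u + u') v = bi i u v + bi i u' v)
    (hbnd : ∀ i, ∀ u : BraceVec p (nn i), (∀ v, bi i u v = 0) → u = 0)
    (hbc : ∀ i, ∀ u v : BraceVec p (nn i), bi i (c i u) (c i v) = bi i u v)
    (hbf : ∀ i, ∀ u v : BraceVec p (nn i), bi i (f i u) (f i v) = bi i u v)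
    (hN : IsIdealBraceB bi c f γ N) {x : BraceB p s l nn} (hx : x ∈ N)
    (hxne : x ≠ ((0 : BraceT p s l nn), (0 : ZMod p))) :
    ((0 : BraceT p s l nn), (1 : ZMod p)) ∈ N := by
  by_cases h1 : ∃ j, x.1.1 j ≠ 0
  · obtain ⟨j, hj⟩ := h1
    exact brZetaOfVec c f γ bi hp hl hfo hco hγo hcomm hbsymm hbadd hbnd hbc hbf hN hx hj
  · push_neg at h1
    have hu : x.1.1 = 0 := funext fun j => h1 j
    by_cases h2 : ∃ j, x.1.2 j ≠ 0
    · obtain ⟨j, hj⟩ := h2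
      exact brZetaOfA c f γ bi hp hl hdiv hfo hco hγo hcomm hbsymm hbadd hbnd hbc hbf hN
        hx hu hj
    · push_neg at h2
      have ha : x.1.2 = 0 := funext fun j => h2 j
      have hxeq : x = ((0 : BraceT p s l nn), x.2) :=
        Prod.ext (Prod.ext (by exact hu) (by exact ha)) rfl
      have hμ : x.2 ≠ 0 := by
        intro h0
        apply hxne
        rw [hxeq, h0]
      have hx0 : ((0 : BraceT p s l nn), x.2) ∈ N := by rwa [hxeq] at hx
      exact brZmulMem c f γ bi hp hl hfo hco hγo hcomm hbsymm hbadd hbc hbf hN hx0 hμ 1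

lemma brElConjSub (hp : p.Prime) (hl : ∀ i, 1 < l i)
    (hfo : ∀ i, addOrderOf (f i) = p) (hco : ∀ i, addOrderOf (c i) = l i)
    (hγo : ∀ i, orderOf (γ i) = p)
    (hcomm : ∀ i, f i + c i = (((γ i : ZMod (l i)).val) • c i) + f i)
    (hbsymm : ∀ i, ∀ u v : BraceVec p (nn i), bi i u v = bi i v u)
    (hbadd : ∀ i, ∀ u u' v : BraceVec p (nn i), bi i (u + u') v = bi i u v + bi i u' v)
    (hbc : ∀ i, ∀ u v : BraceVec p (nn i), bi i (c i u) (c i v) = bi i u v)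
    (hbf : ∀ i, ∀ u v : BraceVec p (nn i), bi i (f i u) (f i v) = bi i u v)
    (hN : IsIdealBraceB bi c f γ N) {x : BraceB p s l nn} (hx : x ∈ N)
    (w : ∀ i, BraceVec p (nn i)) :
    ∃ ν, ((fun i => w i + (((x.1.2 i).val • c i)) (((x.2.val • f i)) (-(w i))),
      (0 : ∀ i, ZMod (l i))), ν) ∈ N := by
  obtain ⟨⟨vv, aa⟩, μ⟩ := x
  have hcj := brElConj c f γ bi hp hl hN hx w
  have hd := brAddMem c f γ bi hp hl hfo hco hγo hcomm hbsymm hbadd hbc hbf hN hcj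
    (brNegMem c f γ bi hp hl hfo hco hγo hbadd hN hx)
  have hd2 : braceBadd bi
      ((fun i => w i + vv i + (((aa i).val • c i)) (((μ.val • f i)) (-(w i))), aa), μ)
      (braceBneg bi ((vv, aa), μ)) ∈ N := hd
  have he : braceBadd bi
      ((fun i => w i + vv i + (((aa i).val • c i)) (((μ.val • f i)) (-(w i))), aa), μ)
      (braceBneg bi ((vv, aa), μ))
      = ((fun i => w i + (((aa i).val • c i)) (((μ.val • f i)) (-(w i))),
          (0 : ∀ i, ZMod (l i))),
        μ + (-μ - braceBil bi ((vv, aa) : BraceT p s l nn) (-((vv, aa) : BraceT p s l nn)))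
          + braceBil bi
            ((fun i => w i + vv i + (((aa i).val • c i)) (((μ.val • f i)) (-(w i))), aa) :
              BraceT p s l nn)
            (-((vv, aa) : BraceT p s l nn))) := by
    refine Prod.ext (Prod.ext (funext fun i => ?_) (funext fun i => ?_)) rfl
    · show w i + vv i + (((aa i).val • c i)) (((μ.val • f i)) (-(w i))) + -(vv i)
        = w i + (((aa i).val • c i)) (((μ.val • f i)) (-(w i)))
      abel
    · show aa i + -(aa i) = 0
      simp
  rw [he] at hd2
  exact ⟨_, hd2⟩

end Main9
section Main10

variable {p s : ℕ} {l nn : Fin s → ℕ}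
  (c f : ∀ i : Fin s, AddAut (BraceVec p (nn i)))
  (γ : ∀ i : Fin s, (ZMod (l i))ˣ)
  (bi : ∀ i : Fin s, BraceVec p (nn i) → BraceVec p (nn i) → ZMod p)
  {N : Set (BraceB p s l nn)}

lemma brIdealUniv (hp : p.Prime) (hl : ∀ i, 1 < l i)
    (hdiv : ∀ q : ℕ, q.Prime → q ∣ ∏ i, l i → p ∣ q - 1)
    (hfo : ∀ i, addOrderOf (f i) = p) (hco : ∀ i, addOrderOf (c i) = l i)
    (hγo : ∀ i, orderOf (γ i) = p)
    (hcomm : ∀ i, f i + c i = (((γ i : ZMod (l i)).val) • c i) + f i)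
    (hγ1 : ∀ i, IsUnit ((γ i : ZMod (l i)) - 1))
    (hbsymm : ∀ i, ∀ u v : BraceVec p (nn i), bi i u v = bi i v u)
    (hbadd : ∀ i, ∀ u u' v : BraceVec p (nn i), bi i (u + u') v = bi i u v + bi i u' v)
    (hbnd : ∀ i, ∀ u : BraceVec p (nn i), (∀ v, bi i u v = 0) → u = 0)
    (hbc : ∀ i, ∀ u v : BraceVec p (nn i), bi i (c i u) (c i v) = bi i u v)
    (hbf : ∀ i, ∀ u v : BraceVec p (nn i), bi i (f i u) (f i v) = bi i u v)
    (hcond : ∀ i : Fin s, ∀ w : BraceVec p (nn i), ∃ u v : BraceVec p (nn i),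
        w = ((c i) u - u) + ((f i) v - v))
    (hN : IsIdealBraceB bi c f γ N)
    (hne : N ≠ {((0 : BraceT p s l nn), (0 : ZMod p))}) : N = Set.univ := by
  haveI : Fact p.Prime := ⟨hp⟩
  haveI : NeZero p := ⟨hp.ne_zero⟩
  haveI : Fact (1 < p) := ⟨hp.one_lt⟩
  obtain ⟨x, hx, hxne⟩ : ∃ x ∈ N, x ≠ ((0 : BraceT p s l nn), (0 : ZMod p)) := by
    by_contra h
    push_neg at h
    exact hne (Set.eq_singleton_iff_unique_mem.mpr ⟨hN.1, h⟩)
  have hz := brZeta c f γ bi hp hl hdiv hfo hco hγo hcomm hbsymm hbadd hbnd hbc hbf hN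
    hx hxne
  have hcent : ∀ t : ZMod p, ((0 : BraceT p s l nn), t) ∈ N := fun t =>
    brZmulMem c f γ bi hp hl hfo hco hγo hcomm hbsymm hbadd hbc hbf hN hz one_ne_zero t
  have hbeta := brBetaMem c f γ bi hp hl hfo hco hγo hcomm hγ1 hbsymm hbadd hbc hbf hN hz
  let W : AddSubgroup (∀ i, BraceVec p (nn i)) :=
    { carrier := {w | ∃ ν, ((w, (0 : ∀ i, ZMod (l i))), ν) ∈ N}
      zero_mem' := ⟨0, hN.1⟩
      add_mem' := by
        rintro a b ⟨ν, ha⟩ ⟨ν', hb⟩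
        refine ⟨ν + ν' + braceBil bi (a, (0 : ∀ i, ZMod (l i))) (b, (0 : ∀ i, ZMod (l i))), ?_⟩
        have hm := brAddMem c f γ bi hp hl hfo hco hγo hcomm hbsymm hbadd hbc hbf hN ha hb
        have he : braceBadd bi ((a, (0 : ∀ i, ZMod (l i))), ν) ((b, (0 : ∀ i, ZMod (l i))), ν')
            = ((a + b, (0 : ∀ i, ZMod (l i))),
              ν + ν' + braceBil bi (a, (0 : ∀ i, ZMod (l i))) (b, (0 : ∀ i, ZMod (l i)))) := by
          refine Prod.ext ?_ rfl
          show (a, (0 : ∀ i, ZMod (l i))) + (b, (0 : ∀ i, ZMod (l i)))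
            = (a + b, (0 : ∀ i, ZMod (l i)))
          rw [Prod.mk_add_mk, add_zero]
        rwa [he] at hm
      neg_mem' := by
        rintro a ⟨ν, ha⟩
        refine ⟨-ν - braceBil bi (a, (0 : ∀ i, ZMod (l i)))
          (-(a, (0 : ∀ i, ZMod (l i)))), ?_⟩
        have hm := brNegMem c f γ bi hp hl hfo hco hγo hbadd hN ha
        have he : braceBneg bi ((a, (0 : ∀ i, ZMod (l i))), ν)
            = ((-a, (0 : ∀ i, ZMod (l i))),
              -ν - braceBil bi (a, (0 : ∀ i, ZMod (l i))) (-(a, (0 : ∀ i, ZMod (l i))))) := by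
          refine Prod.ext ?_ rfl
          show -(a, (0 : ∀ i, ZMod (l i))) = (-a, (0 : ∀ i, ZMod (l i)))
          rw [Prod.neg_mk, neg_zero]
        rwa [he] at hm }
  have hWf : ∀ (j : Fin s) (v : BraceVec p (nn j)),
      (Pi.single j (f j v - v) : ∀ i, BraceVec p (nn i)) ∈ W := by
    intro j v
    have hc2 := brElConj c f γ bi hp hl hN hz (Pi.single j (-v))
    refine ⟨1, ?_⟩
    convert hc2 using 3
    funext i
    rcases eq_or_ne i j with rfl | hne
    · simp [ZMod.val_one, ZMod.val_zero]
      abel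
    · simp [Pi.single_eq_of_ne hne, ZMod.val_zero]
    rfl
  have hWc : ∀ (j : Fin s) (u : BraceVec p (nn j)),
      (Pi.single j (c j u - u) : ∀ i, BraceVec p (nn i)) ∈ W := by
    intro j u
    have hb1 := hbeta (Pi.single j (1 : ZMod (l j)))
    obtain ⟨ν, hν⟩ := brElConjSub c f γ bi hp hl hfo hco hγo hcomm hbsymm hbadd hbc hbf hN
      hb1 (Pi.single j (-u))
    refine ⟨ν, ?_⟩
    convert hν using 3
    funext i
    haveI : NeZero (l i) := ⟨by have := hl i; omega⟩
    rcases eq_or_ne i j with rfl | hne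
    · haveI : Fact (1 < l i) := ⟨hl i⟩
      simp [ZMod.val_zero, ZMod.val_one]
      abel
    · simp [Pi.single_eq_of_ne hne, ZMod.val_zero]
  have hWtop : ∀ w : ∀ i, BraceVec p (nn i), w ∈ W := by
    intro w
    have hsum : w = ∑ j, Pi.single j (w j) := (Finset.univ_sum_single w).symm
    rw [hsum]
    refine AddSubgroup.sum_mem W fun j _ => ?_
    obtain ⟨u, v, huv⟩ := hcond j (w j)
    rw [huv, Pi.single_add]
    exact W.add_mem (hWc j u) (hWf j v)
  apply Set.eq_univ_of_forall
  rintro ⟨⟨wv, β⟩, ν⟩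
  obtain ⟨ν₁, h1⟩ := hWtop wv
  have h3 := brAddMem c f γ bi hp hl hfo hco hγo hcomm hbsymm hbadd hbc hbf hN h1 (hbeta β)
  have he3 : braceBadd bi ((wv, (0 : ∀ i, ZMod (l i))), ν₁)
      (((0 : ∀ i, BraceVec p (nn i)), β), (0 : ZMod p)) = ((wv, β), ν₁) := by
    refine Prod.ext ?_ ?_
    · show (wv, (0 : ∀ i, ZMod (l i))) + ((0 : ∀ i, BraceVec p (nn i)), β) = (wv, β)
      rw [Prod.mk_add_mk, add_zero, zero_add]
    · show ν₁ + 0 + braceBil bi ((wv, (0 : ∀ i, ZMod (l i))) : BraceT p s l nn)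
        (((0 : ∀ i, BraceVec p (nn i)), β) : BraceT p s l nn) = ν₁
      have hb0 : braceBil bi ((wv, (0 : ∀ i, ZMod (l i))) : BraceT p s l nn)
          (((0 : ∀ i, BraceVec p (nn i)), β) : BraceT p s l nn) = 0 := by
        simp [braceBil, brBzr bi hbsymm hbadd]
      rw [hb0]
      ring
  rw [he3] at h3
  have h4 := brAddMem c f γ bi hp hl hfo hco hγo hcomm hbsymm hbadd hbc hbf hN h3
    (hcent (ν - ν₁))
  have he4 : braceBadd bi ((wv, β), ν₁) ((0 : BraceT p s l nn), ν - ν₁) = ((wv, β), ν) := by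
    refine Prod.ext ?_ ?_
    · show ((wv, β) : BraceT p s l nn) + (0 : BraceT p s l nn) = (wv, β)
      rw [add_zero]
    · show ν₁ + (ν - ν₁) + braceBil bi ((wv, β) : BraceT p s l nn) (0 : BraceT p s l nn) = ν
      have hb0 : braceBil bi ((wv, β) : BraceT p s l nn) (0 : BraceT p s l nn) = 0 := by
        simp [braceBil, brBzr bi hbsymm hbadd]
      rw [hb0]
      ring
  rwa [he4] at h4

end Main10
section VV

variable {E : Type*} [AddCommGroup E] (cc ff : AddAut E)

def brPhi (g : AddAut E) : E →+ E :=
  AddMonoidHom.mk' (fun u => g u - u) (by intro a b; simp only [map_add]; abel)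

def brV : AddSubgroup E := (brPhi cc).range ⊔ (brPhi ff).range

lemma brVmem (u v : E) : cc u - u + (ff v - v) ∈ brV cc ff :=
  AddSubgroup.add_mem _ (AddSubgroup.mem_sup_left ⟨u, rfl⟩)
    (AddSubgroup.mem_sup_right ⟨v, rfl⟩)

lemma brVdest {x : E} (hx : x ∈ brV cc ff) : ∃ u v, x = cc u - u + (ff v - v) := by
  rcases AddSubgroup.mem_sup.mp hx with ⟨y, hy, z, hz, hyz⟩
  rcases hy with ⟨u, rfl⟩
  rcases hz with ⟨v, rfl⟩
  exact ⟨u, v, hyz.symm⟩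

lemma brVc (u : E) : cc u - u ∈ brV cc ff := by
  have h := brVmem cc ff u 0
  simpa using h

lemma brVf (v : E) : ff v - v ∈ brV cc ff := by
  have h := brVmem cc ff 0 v
  simpa using h

lemma brVcpow (k : ℕ) (x : E) : ((k • cc)) x - x ∈ brV cc ff := by
  induction k with
  | zero => simpa using (brV cc ff).zero_mem
  | succ k ih =>
    have he : (((k+1) • cc)) x - x = (cc (((k • cc)) x) - ((k • cc)) x) + (((k • cc)) x - x) := by
      rw [succ_nsmul', AddAut.add_apply]
      abel
    rw [he]
    exact (brV cc ff).add_mem (brVc cc ff _) ih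

lemma brVfpow (k : ℕ) (x : E) : ((k • ff)) x - x ∈ brV cc ff := by
  induction k with
  | zero => simpa using (brV cc ff).zero_mem
  | succ k ih =>
    have he : (((k+1) • ff)) x - x = (ff (((k • ff)) x) - ((k • ff)) x) + (((k • ff)) x - x) := by
      rw [succ_nsmul', AddAut.add_apply]
      abel
    rw [he]
    exact (brV cc ff).add_mem (brVf cc ff _) ih

lemma brVstabC {k : ℕ} (hk : ff + (k • cc) = cc + ff) {x : E} (hx : x ∈ brV cc ff) :
    cc x ∈ brV cc ff := by
  obtain ⟨u, v, rfl⟩ := brVdest cc ff hx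
  have hcf : cc (ff v) = ff (((k • cc)) v) := by
    rw [← AddAut.add_apply, ← hk, AddAut.add_apply]
  have he : cc (cc u - u + (ff v - v))
      = (cc (cc u) - cc u) + (ff (((k • cc)) v) - ((k • cc)) v)
        + (((k • cc)) v - v) - (cc v - v) := by
    rw [map_add, map_sub, map_sub, hcf]
    abel
  rw [he]
  exact AddSubgroup.sub_mem _ (AddSubgroup.add_mem _ (AddSubgroup.add_mem _
    (brVc cc ff _) (brVf cc ff _)) (brVcpow cc ff _ _)) (brVc cc ff _)

lemma brVstabF {r : ℕ} (hcm : ff + cc = (r • cc) + ff) {x : E} (hx : x ∈ brV cc ff) :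
    ff x ∈ brV cc ff := by
  obtain ⟨u, v, rfl⟩ := brVdest cc ff hx
  have hfc : ff (cc u) = ((r • cc)) (ff u) := by
    rw [← AddAut.add_apply, hcm, AddAut.add_apply]
  have he : ff (cc u - u + (ff v - v))
      = (((r • cc)) (ff u) - ff u) + (ff (ff v) - ff v) := by
    rw [map_add, map_sub, map_sub, hfc]
  rw [he]
  exact AddSubgroup.add_mem _ (brVcpow cc ff _ _) (brVf cc ff _)

lemma brVstabCpow {k : ℕ} (hk : ff + (k • cc) = cc + ff) (m : ℕ) {x : E}
    (hx : x ∈ brV cc ff) : ((m • cc)) x ∈ brV cc ff := by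
  induction m with
  | zero => simpa using hx
  | succ m ih =>
    rw [succ_nsmul', AddAut.add_apply]
    exact brVstabC cc ff hk ih

lemma brVstabFpow {r : ℕ} (hcm : ff + cc = (r • cc) + ff) (m : ℕ) {x : E}
    (hx : x ∈ brV cc ff) : ((m • ff)) x ∈ brV cc ff := by
  induction m with
  | zero => simpa using hx
  | succ m ih =>
    rw [succ_nsmul', AddAut.add_apply]
    exact brVstabF cc ff hcm ih

end VV
section Main12

variable {p s : ℕ} {l nn : Fin s → ℕ}
  (c f : ∀ i : Fin s, AddAut (BraceVec p (nn i)))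
  (γ : ∀ i : Fin s, (ZMod (l i))ˣ)
  (bi : ∀ i : Fin s, BraceVec p (nn i) → BraceVec p (nn i) → ZMod p)

lemma brCpowCancel' (hl : ∀ i, 1 < l i) (hco : ∀ i, addOrderOf (c i) = l i) (i : Fin s)
    (a : ZMod (l i)) (z : BraceVec p (nn i)) :
    (((-a).val • c i)) (((a.val • c i)) z) = z := by
  have h := brCpowCancel c hl hco i (-a) z
  rwa [neg_neg] at h

lemma brFpowCancel' (hp : p.Prime) (hfo : ∀ i, addOrderOf (f i) = p) (i : Fin s)
    (μ : ZMod p) (z : BraceVec p (nn i)) :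
    (((-μ).val • f i)) (((μ.val • f i)) z) = z := by
  have h := brFpowCancel f hp hfo i (-μ) z
  rwa [neg_neg] at h

/-- `f ∘ c^{(γ⁻¹).val} = c ∘ f`. -/
lemma brKi (hl : ∀ i, 1 < l i) (hco : ∀ i, addOrderOf (c i) = l i)
    (hcomm : ∀ i, f i + c i = (((γ i : ZMod (l i)).val) • c i) + f i) (i : Fin s) :
    f i + (((((γ i)⁻¹ : (ZMod (l i))ˣ) : ZMod (l i))).val • c i) = c i + f i := by
  haveI : NeZero (l i) := ⟨by have := hl i; omega⟩
  have h := brCommNsmul (hcomm i) 1 ((((γ i)⁻¹ : (ZMod (l i))ˣ) : ZMod (l i))).val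
  simp only [one_nsmul, pow_one] at h
  rw [h]
  congr 1
  have hcast : (((γ i : ZMod (l i)).val
      * ((((γ i)⁻¹ : (ZMod (l i))ˣ) : ZMod (l i))).val : ℕ) : ZMod (l i))
      = ((1 : ℕ) : ZMod (l i)) := by
    push_cast [brValCast]
    exact Units.mul_inv (γ i)
  have := brNsmulCongr (c i) (hco i) hcast
  rw [this, one_nsmul]

lemma brIdealV (hp : p.Prime) (hl : ∀ i, 1 < l i)
    (hfo : ∀ i, addOrderOf (f i) = p) (hco : ∀ i, addOrderOf (c i) = l i)
    (hγo : ∀ i, orderOf (γ i) = p)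
    (hcomm : ∀ i, f i + c i = (((γ i : ZMod (l i)).val) • c i) + f i)
    (hbsymm : ∀ i, ∀ u v : BraceVec p (nn i), bi i u v = bi i v u)
    (hbadd : ∀ i, ∀ u u' v : BraceVec p (nn i), bi i (u + u') v = bi i u v + bi i u' v) :
    IsIdealBraceB bi c f γ {x : BraceB p s l nn | ∀ i, x.1.1 i ∈ brV (c i) (f i)} := by
  haveI : NeZero p := ⟨hp.ne_zero⟩
  refine ⟨?_, ?_, ?_, ?_, ?_⟩
  · intro i
    show (0 : BraceT p s l nn).1 i ∈ brV (c i) (f i)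
    simpa using (brV (c i) (f i)).zero_mem
  · intro x hx y hy i
    show x.1.1 i + (((x.1.2 i).val • c i)) (((x.2.val • f i)) (y.1.1 i)) ∈ brV (c i) (f i)
    exact AddSubgroup.add_mem _ (hx i)
      (brVstabCpow (c i) (f i) (brKi c f γ hl hco hcomm i) _
        (brVstabFpow (c i) (f i) (hcomm i) _ (hy i)))
  · intro x hx y hxy i
    haveI : NeZero (l i) := ⟨by have := hl i; omega⟩
    have h1 : x.1.1 i + (((x.1.2 i).val • c i)) (((x.2.val • f i)) (y.1.1 i)) = 0 :=
      congrArg (fun z : BraceB p s l nn => z.1.1 i) hxy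
    have h2 : (((x.1.2 i).val • c i)) (((x.2.val • f i)) (y.1.1 i)) = -(x.1.1 i) := by
      linear_combination h1
    have h3 := congrArg (fun z => (((-x.2).val • f i)) ((((-(x.1.2 i)).val • c i)) z)) h2
    simp only [brCpowCancel' c hl hco, brFpowCancel' f hp hfo] at h3
    show y.1.1 i ∈ brV (c i) (f i)
    rw [h3]
    exact brVstabFpow (c i) (f i) (hcomm i) _
      (brVstabCpow (c i) (f i) (brKi c f γ hl hco hcomm i) _
        (AddSubgroup.neg_mem _ (hx i)))
  · intro g x hx g' hgg' i
    haveI : NeZero (l i) := ⟨by have := hl i; omega⟩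
    have h1 : g.1.1 i + (((g.1.2 i).val • c i)) (((g.2.val • f i)) (g'.1.1 i)) = 0 :=
      congrArg (fun z : BraceB p s l nn => z.1.1 i) hgg'
    have h2 : (((g.1.2 i).val • c i)) (((g.2.val • f i)) (g'.1.1 i)) = -(g.1.1 i) := by
      linear_combination h1
    have h3 := congrArg (fun z => (((-g.2).val • f i)) ((((-(g.1.2 i)).val • c i)) z)) h2
    simp only [brCpowCancel' c hl hco, brFpowCancel' f hp hfo] at h3
    show (g.1.1 i + (((g.1.2 i).val • c i)) (((g.2.val • f i)) (x.1.1 i)))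
        + ((((g.1.2 i + ((γ i : ZMod (l i)) ^ g.2.val) * x.1.2 i)).val • c i))
          (((((g.2 + x.2)).val • f i)) (g'.1.1 i)) ∈ brV (c i) (f i)
    rw [h3]
    have hf2 : ∀ z, ((((g.2 + x.2)).val • f i)) ((((-g.2).val • f i)) z)
        = ((x.2.val • f i)) z := by
      intro z
      rw [← AddAut.add_apply, ← brFpowAdd f hp hfo,
        show g.2 + x.2 + -g.2 = x.2 from by ring]
    rw [hf2]
    have hfc : ∀ z, ((x.2.val • f i)) ((((-(g.1.2 i)).val • c i)) z)
        = (((((γ i : ZMod (l i)) ^ x.2.val) * (-(g.1.2 i))).val • c i))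
            (((x.2.val • f i)) z) := by
      intro z
      rw [← AddAut.add_apply, ← AddAut.add_apply, brFcComm c f γ hl hco hcomm]
    rw [hfc]
    have hcc : ∀ z, ((((g.1.2 i + ((γ i : ZMod (l i)) ^ g.2.val) * x.1.2 i)).val • c i))
        ((((((γ i : ZMod (l i)) ^ x.2.val) * (-(g.1.2 i))).val • c i)) z)
        = ((((g.1.2 i + ((γ i : ZMod (l i)) ^ g.2.val) * x.1.2 i
            + ((γ i : ZMod (l i)) ^ x.2.val) * (-(g.1.2 i)))).val • c i)) z := by
      intro z
      rw [← AddAut.add_apply, ← brCpowAdd c hl hco]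
    rw [hcc, map_neg, map_neg]
    have he : (g.1.1 i + (((g.1.2 i).val • c i)) (((g.2.val • f i)) (x.1.1 i)))
        + -(((((g.1.2 i + ((γ i : ZMod (l i)) ^ g.2.val) * x.1.2 i
            + ((γ i : ZMod (l i)) ^ x.2.val) * (-(g.1.2 i)))).val • c i))
          (((x.2.val • f i)) (g.1.1 i)))
        = (((g.1.2 i).val • c i)) (((g.2.val • f i)) (x.1.1 i))
          + -(((x.2.val • f i)) (g.1.1 i) - g.1.1 i)
          + -(((((g.1.2 i + ((γ i : ZMod (l i)) ^ g.2.val) * x.1.2 i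
              + ((γ i : ZMod (l i)) ^ x.2.val) * (-(g.1.2 i)))).val • c i))
            (((x.2.val • f i)) (g.1.1 i)) - ((x.2.val • f i)) (g.1.1 i)) := by
      abel
    rw [he]
    refine AddSubgroup.add_mem _ (AddSubgroup.add_mem _ ?_ ?_) ?_
    · exact brVstabCpow (c i) (f i) (brKi c f γ hl hco hcomm i) _
        (brVstabFpow (c i) (f i) (hcomm i) _ (hx i))
    · exact AddSubgroup.neg_mem _ (brVfpow (c i) (f i) _ _)
    · exact AddSubgroup.neg_mem _ (brVcpow (c i) (f i) _ _)
  · intro g x hx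
    rw [brLamEq c f γ bi hbsymm hbadd]
    intro i
    show (((g.1.2 i).val • c i)) (((g.2.val • f i)) (x.1.1 i)) ∈ brV (c i) (f i)
    exact brVstabCpow (c i) (f i) (brKi c f γ hl hco hcomm i) _
      (brVstabFpow (c i) (f i) (hcomm i) _ (hx i))

end Main12
/-- the left brace `B = T ⋊∘ Z/(p)` is simple if and only if
`im(c_i − id) + im(f_i − id) = (Z/(p))^{n_i}` for every `i`; in particular `B` is
simple whenever `c_i − id` is invertible for every `i`. -/
theorem braceB_simple_iff
    (p s : ℕ) (l nn : Fin s → ℕ)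
    (c f : ∀ i : Fin s, AddAut (BraceVec p (nn i)))
    (γ : ∀ i : Fin s, (ZMod (l i))ˣ)
    (bi : ∀ i : Fin s, BraceVec p (nn i) → BraceVec p (nn i) → ZMod p)
    (hp : p.Prime) (hl : ∀ i, 1 < l i)
    (hdiv : ∀ q : ℕ, q.Prime → q ∣ ∏ i, l i → p ∣ q - 1)
    (hfo : ∀ i, addOrderOf (f i) = p)
    (hco : ∀ i, addOrderOf (c i) = l i)
    (hγo : ∀ i, orderOf (γ i) = p)
    (hcomm : ∀ i, f i + c i = ((γ i : ZMod (l i)).val) • c i + f i)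
    (hγ1 : ∀ i, IsUnit ((γ i : ZMod (l i)) - 1))
    (hbsymm : ∀ i, ∀ u v : BraceVec p (nn i), bi i u v = bi i v u)
    (hbadd : ∀ i, ∀ u u' v : BraceVec p (nn i), bi i (u + u') v = bi i u v + bi i u' v)
    (hbnd : ∀ i, ∀ u : BraceVec p (nn i), (∀ v, bi i u v = 0) → u = 0)
    (hbc : ∀ i, ∀ u v : BraceVec p (nn i), bi i (c i u) (c i v) = bi i u v)
    (hbf : ∀ i, ∀ u v : BraceVec p (nn i), bi i (f i u) (f i v) = bi i u v) :
    (((∃ x : BraceB p s l nn, x ≠ ((0 : BraceT p s l nn), (0 : ZMod p))) ∧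
        ∀ N : Set (BraceB p s l nn), IsIdealBraceB bi c f γ N →
          N = {((0 : BraceT p s l nn), (0 : ZMod p))} ∨ N = Set.univ) ↔
      (∀ i : Fin s, ∀ w : BraceVec p (nn i), ∃ u v : BraceVec p (nn i),
          w = ((c i) u - u) + ((f i) v - v))) ∧
    ((∀ i : Fin s, Function.Bijective (fun u : BraceVec p (nn i) => (c i) u - u)) →
      ((∃ x : BraceB p s l nn, x ≠ ((0 : BraceT p s l nn), (0 : ZMod p))) ∧
        ∀ N : Set (BraceB p s l nn), IsIdealBraceB bi c f γ N →
          N = {((0 : BraceT p s l nn), (0 : ZMod p))} ∨ N = Set.univ)) := by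
  haveI : Fact p.Prime := ⟨hp⟩
  have hzne : ((0 : BraceT p s l nn), (1 : ZMod p)) ≠ ((0 : BraceT p s l nn), (0 : ZMod p)) := by
    intro h
    exact one_ne_zero (congrArg Prod.snd h)
  have hback : (∀ i : Fin s, ∀ w : BraceVec p (nn i), ∃ u v : BraceVec p (nn i),
      w = ((c i) u - u) + ((f i) v - v)) →
      ((∃ x : BraceB p s l nn, x ≠ ((0 : BraceT p s l nn), (0 : ZMod p))) ∧
        ∀ N : Set (BraceB p s l nn), IsIdealBraceB bi c f γ N →
          N = {((0 : BraceT p s l nn), (0 : ZMod p))} ∨ N = Set.univ) := by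
    intro hcond
    refine ⟨⟨_, hzne⟩, fun N hN => ?_⟩
    by_cases h : N = {((0 : BraceT p s l nn), (0 : ZMod p))}
    · exact Or.inl h
    · exact Or.inr (brIdealUniv c f γ bi hp hl hdiv hfo hco hγo hcomm hγ1 hbsymm hbadd
        hbnd hbc hbf hcond hN h)
  have hfwd : ((∃ x : BraceB p s l nn, x ≠ ((0 : BraceT p s l nn), (0 : ZMod p))) ∧
      ∀ N : Set (BraceB p s l nn), IsIdealBraceB bi c f γ N →
        N = {((0 : BraceT p s l nn), (0 : ZMod p))} ∨ N = Set.univ) →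
      ∀ i : Fin s, ∀ w : BraceVec p (nn i), ∃ u v : BraceVec p (nn i),
        w = ((c i) u - u) + ((f i) v - v) := by
    rintro ⟨-, hsimp⟩ j w0
    have hideal := brIdealV c f γ bi hp hl hfo hco hγo hcomm hbsymm hbadd
    rcases hsimp _ hideal with h0 | huniv
    · exfalso
      have hz : ((0 : BraceT p s l nn), (1 : ZMod p))
          ∈ {x : BraceB p s l nn | ∀ i, x.1.1 i ∈ brV (c i) (f i)} := by
        intro i
        show (0 : BraceT p s l nn).1 i ∈ brV (c i) (f i)
        simpa using (brV (c i) (f i)).zero_mem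
      rw [h0] at hz
      exact hzne hz
    · have hmem : ((Pi.single j w0, (0 : ∀ i, ZMod (l i))), (0 : ZMod p))
          ∈ {x : BraceB p s l nn | ∀ i, x.1.1 i ∈ brV (c i) (f i)} := by
        rw [huniv]
        exact Set.mem_univ _
      have h2 : (Pi.single j w0 : ∀ i, BraceVec p (nn i)) j ∈ brV (c j) (f j) := hmem j
      rw [Pi.single_eq_same] at h2
      exact brVdest (c j) (f j) h2
  refine ⟨⟨hfwd, hback⟩, fun hbij => hback fun i w => ?_⟩
  obtain ⟨u, hu⟩ := (hbij i).2 w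
  have hu' : (c i) u - u = w := hu
  exact ⟨u, 0, by rw [← hu']; simp⟩
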